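/- Let Γ be a finite connected graph, (Γ₁, Γ₂, Γ₃) a splitting of Γ, and f : A(Γ) → ℝ a nonzero homomorphism with discrete image whose kernel is finitely generated. Then the restriction f₃ of f to A(Γ₃) is not identically zero. -/

import Mathlib

/-- The defining relators of the right-angled Artin group of a graph. -/
def raagRels {V : Type*} (Γ : SimpleGraph V) : Set (FreeGroup V) :=
  {r | ∃ v w : V, Γ.Adj v w ∧
    r = FreeGroup.of v * FreeGroup.of w * (FreeGroup.of v)⁻¹ * (FreeGroup.of w)⁻¹}

/-- The right-angled Artin group of a graph Γ. -/
def RAAG {V : Type*} (Γ : SimpleGraph V) : Type _ := PresentedGroup (raagRels Γ)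

noncomputable instance {V : Type*} (Γ : SimpleGraph V) : Group (RAAG Γ) :=
  inferInstanceAs (Group (PresentedGroup (raagRels Γ)))

/-- The generator of `RAAG Γ` corresponding to a vertex. -/
def RAAG.of {V : Type*} {Γ : SimpleGraph V} (v : V) : RAAG Γ := PresentedGroup.of v

/-- A homomorphism `A(Γ) → (ℝ,+)` (encoded as a monoid hom to `Multiplicative ℝ`) is
discrete if its image is an infinite cyclic subgroup of ℝ, i.e. the set of integer
multiples of some nonzero real number. -/
def IsDiscreteChar {V : Type*} {Γ : SimpleGraph V} (f : RAAG Γ →* Multiplicative ℝ) : Prop :=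
  ∃ a : ℝ, a ≠ 0 ∧ (∀ x : RAAG Γ, ∃ n : ℤ, (f x).toAdd = n • a) ∧
    ∃ x : RAAG Γ, (f x).toAdd = a

open LaurentPolynomial in
/-- The lamplighter-like group ℤ[T,T⁻¹] ⋊ ℤ. -/
structure LL where
  q : LaurentPolynomial ℤ
  z : ℤ

namespace LL

open LaurentPolynomial

@[ext] lemma ext {x y : LL} (hq : x.q = y.q) (hz : x.z = y.z) : x = y := by
  cases x; cases y; simp_all

noncomputable instance : Mul LL := ⟨fun x y => ⟨x.q + T x.z * y.q, x.z + y.z⟩⟩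
noncomputable instance : One LL := ⟨⟨0, 0⟩⟩
noncomputable instance : Inv LL := ⟨fun x => ⟨-(T (-x.z) * x.q), -x.z⟩⟩

lemma mul_def (x y : LL) : x * y = ⟨x.q + T x.z * y.q, x.z + y.z⟩ := rfl
lemma one_def : (1 : LL) = ⟨0, 0⟩ := rfl
lemma inv_def (x : LL) : x⁻¹ = ⟨-(T (-x.z) * x.q), -x.z⟩ := rfl

noncomputable instance : Group LL :=
  Group.ofLeftAxioms
    (fun a b c => by
      apply LL.ext
      · show (a.q + T a.z * b.q) + T (a.z + b.z) * c.q
            = a.q + T a.z * (b.q + T b.z * c.q)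
        rw [T_add]; ring
      · exact add_assoc _ _ _)
    (fun a => by
      apply LL.ext
      · show 0 + T 0 * a.q = a.q
        simp
      · exact zero_add _)
    (fun a => by
      apply LL.ext
      · show -(T (-a.z) * a.q) + T (-a.z) * a.q = 0
        ring
      · exact neg_add_cancel _)

/-- projection to the ℤ-factor. -/
noncomputable def π₂ : LL →* Multiplicative ℤ where
  toFun x := Multiplicative.ofAdd x.z
  map_one' := rfl
  map_mul' _ _ := rfl

/-- inclusion of the ℤ-factor. -/
noncomputable def ι : Multiplicative ℤ →* LL where
  toFun s := ⟨0, s.toAdd⟩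
  map_one' := rfl
  map_mul' s t := by
    apply LL.ext
    · show (0 : LaurentPolynomial ℤ) = 0 + T _ * 0
      simp
    · rfl

lemma z_zpow (x : LL) (j : ℤ) : (x ^ j).z = j * x.z := by
  have h := congrArg Multiplicative.toAdd (map_zpow π₂ x j)
  rw [toAdd_zpow] at h
  simpa [π₂, smul_eq_mul] using h

lemma shift_zpow (k j : ℤ) : (⟨0, k⟩ : LL) ^ j = ⟨0, j * k⟩ := by
  have h1 : (⟨0, k⟩ : LL) = ι (Multiplicative.ofAdd k) := rfl
  have h2 : (⟨0, j * k⟩ : LL) = ι (Multiplicative.ofAdd (j * k)) := rfl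
  rw [h1, h2, ← map_zpow]
  congr 1

lemma conj_shift (N : ℤ) (Q : LaurentPolynomial ℤ) :
    (⟨0, N⟩ : LL) * ⟨Q, 0⟩ * (⟨0, N⟩ : LL)⁻¹ = ⟨T N * Q, 0⟩ := by
  apply LL.ext
  · show (0 + T N * Q) + T (N + 0) * (-(T (-N) * 0)) = T N * Q
    simp
  · show (N + 0) + -N = 0
    ring

lemma g_z (k : ℤ) : ((⟨1, 1⟩ : LL) ^ k).z = k := by simp [z_zpow]

lemma g_q (k : ℤ) : (T 1 - 1) * ((⟨1, 1⟩ : LL) ^ k).q = T k - 1 := by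
  induction k using Int.induction_on with
  | zero => simp [one_def]
  | succ k ih =>
      rw [zpow_add_one, mul_def, g_z]
      have hT : (T ((k : ℤ) + 1) : LaurentPolynomial ℤ) = T (k : ℤ) * T 1 := by rw [T_add]
      rw [hT]
      show (T 1 - 1) * (((⟨1, 1⟩ : LL) ^ (k : ℤ)).q + T (k : ℤ) * 1) = _
      linear_combination ih
  | pred k ih =>
      rw [zpow_sub_one, inv_def, mul_def, g_z]
      have hT : (T (-(k : ℤ) - 1) : LaurentPolynomial ℤ) = T (-(k : ℤ)) * T (-1) := by
        rw [← T_add]; ring_nf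
      have hT2 : T (1 : ℤ) * T (-1) = (1 : LaurentPolynomial ℤ) := by
        rw [← T_add]; norm_num
      rw [hT]
      show (T 1 - 1) * (((⟨1, 1⟩ : LL) ^ (-(k : ℤ))).q + T (-(k : ℤ)) * (-(T (-(1:ℤ)) * 1))) = _
      linear_combination ih - T (-(k : ℤ)) * hT2

lemma T_ne_one {k : ℤ} (hk : k ≠ 0) : (T k : LaurentPolynomial ℤ) ≠ 1 := by
  intro h
  have h' : Finsupp.single k (1 : ℤ) = Finsupp.single 0 1 := congrArg AddMonoidAlgebra.coeff h
  rw [Finsupp.single_eq_single_iff] at h'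
  rcases h' with ⟨h1, _⟩ | ⟨h1, _⟩
  · exact hk h1
  · exact one_ne_zero h1

lemma g_q_ne {k : ℤ} (hk : k ≠ 0) : ((⟨1, 1⟩ : LL) ^ k).q ≠ 0 := by
  intro h
  have h2 := g_q k
  rw [h, mul_zero] at h2
  have h3 : (T k : LaurentPolynomial ℤ) = 1 := by linear_combination -h2
  exact T_ne_one hk h3

lemma T_mul_ne_zero {N : ℤ} {x : LaurentPolynomial ℤ} (hx : x ≠ 0) : T N * x ≠ 0 := by
  intro h
  apply hx
  have h2 : T (-N) * (T N * x) = 0 := by rw [h, mul_zero]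
  rwa [← mul_assoc, ← T_add, neg_add_cancel, T_zero, one_mul] at h2

end LL
section Aux

variable {α : Type*} {rels : Set (FreeGroup α)} {G : Type*} [Group G]

lemma pg_hom_ext (g₁ g₂ : PresentedGroup rels →* G)
    (h : ∀ x, g₁ (PresentedGroup.of x) = g₂ (PresentedGroup.of x)) : g₁ = g₂ :=
  QuotientGroup.monoidHom_ext _ (FreeGroup.ext_hom _ _ h)

end Aux

section Core

open LaurentPolynomial

variable {V : Type*} {Γ : SimpleGraph V}

lemma comm_lift (F : V → LL) (hcomm : ∀ v w, Γ.Adj v w → F v * F w = F w * F v) :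
    ∀ r ∈ raagRels Γ, FreeGroup.lift F r = 1 := by
  rintro r ⟨v, w, hadj, rfl⟩
  simp only [map_mul, map_inv, FreeGroup.lift_apply_of]
  rw [hcomm v w hadj]
  group

set_option maxHeartbeats 1000000 in
/-- Core lemma: if `f` is killed into the shift factor and the kernel hits a nontrivial lamp,
the kernel cannot be finitely generated. -/
lemma core (f : RAAG Γ →* Multiplicative ℝ)
    (a : ℝ) (ha : a ≠ 0) (n : V → ℤ)
    (hn : ∀ v, (f (PresentedGroup.of v)).toAdd = n v • a)
    (F : V → LL) (hFrel : ∀ r ∈ raagRels Γ, FreeGroup.lift F r = 1)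
    (hF2 : ∀ v, (F v).z = n v)
    (p : V) (hFp : F p = ⟨0, n p⟩) (hm : n p ≠ 0)
    (c : RAAG Γ) (hc : f c = 1) (Q : LaurentPolynomial ℤ) (hQ : Q ≠ 0)
    (hhc : (PresentedGroup.toGroup hFrel : RAAG Γ →* LL) c = ⟨Q, 0⟩)
    (hfg : Group.FG f.ker) : False := by
  classical
  set h : RAAG Γ →* LL := PresentedGroup.toGroup hFrel with hh
  -- the ℤ-component of h recovers f
  have hχ : ∀ x : RAAG Γ, f x = Multiplicative.ofAdd (((h x).z : ℝ) * a) := by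
    have hψ :
        (({ toFun := fun s : Multiplicative ℤ =>
              Multiplicative.ofAdd ((s.toAdd : ℝ) * a)
            map_one' := by simp
            map_mul' := fun s t => by
              simp only [toAdd_mul]
              push_cast
              rw [add_mul, ofAdd_add] } : Multiplicative ℤ →* Multiplicative ℝ).comp
          (LL.π₂.comp h)) = f := by
      apply pg_hom_ext
      intro v
      show Multiplicative.ofAdd
          ((((h (PresentedGroup.of v)).z : ℤ) : ℝ) * a) = f (PresentedGroup.of v)
      have h1 : h (PresentedGroup.of v) = F v := PresentedGroup.toGroup.of hFrel
      rw [h1, hF2 v]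
      have h3 : Multiplicative.toAdd (f (PresentedGroup.of v)) = (n v : ℝ) * a := by
        rw [hn v, zsmul_eq_mul]
      rw [← h3]
      exact ofAdd_toAdd _
    intro x
    rw [← hψ]
    rfl
  have hzker : ∀ x : RAAG Γ, f x = 1 → (h x).z = 0 := by
    intro x hx
    have h1 := hχ x
    rw [hx] at h1
    have h0 : ((h x).z : ℝ) * a = 0 := by
      have h2 := congrArg Multiplicative.toAdd h1
      simpa using h2.symm
    rcases mul_eq_zero.mp h0 with h1 | h1
    · exact_mod_cast h1
    · exact absurd h1 ha
  -- the homomorphism from the kernel to the lamp group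
  set ℓ : f.ker →* Multiplicative (LaurentPolynomial ℤ) :=
    { toFun := fun x => Multiplicative.ofAdd (h (x : RAAG Γ)).q
      map_one' := by
        simp only [OneMemClass.coe_one, map_one]
        rfl
      map_mul' := fun x y => by
        have hx : (h (x : RAAG Γ)).z = 0 := hzker _ x.2
        simp only [Subgroup.coe_mul, map_mul]
        rw [LL.mul_def]
        simp only [hx, T_zero, one_mul]
        rw [← ofAdd_add] } with hℓ
  haveI : Group.FG f.ker := hfg
  have hfgr : Subgroup.FG ℓ.range := (Group.fg_iff_subgroup_fg ℓ.range).mp inferInstance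
  obtain ⟨S, hSclo, hSfin⟩ := (Subgroup.fg_iff _).mp hfgr
  set U : Set ℤ := ⋃ s ∈ S, ((Multiplicative.toAdd s).coeff.support : Set ℤ) with hU
  have hUfin : U.Finite := hSfin.biUnion (fun s _ => Finset.finite_toSet _)
  set K : Subgroup (Multiplicative (LaurentPolynomial ℤ)) :=
    { carrier := {x | ((Multiplicative.toAdd x).coeff.support : Set ℤ) ⊆ U}
      one_mem' := by simp
      mul_mem' := by
        intro x y hx hy
        simp only [Set.mem_setOf_eq, toAdd_mul, AddMonoidAlgebra.coeff_add]
        refine subset_trans ?_ (Set.union_subset hx hy)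
        refine subset_trans (Finset.coe_subset.mpr Finsupp.support_add) ?_
        rw [Finset.coe_union]
      inv_mem' := by
        intro x hx
        simp only [Set.mem_setOf_eq, toAdd_inv, AddMonoidAlgebra.coeff_neg]
        rw [Finsupp.support_neg]
        exact hx } with hK
  have hrange : ℓ.range ≤ K := by
    rw [← hSclo]
    refine (Subgroup.closure_le K).mpr ?_
    intro s hs
    have hsub : ((Multiplicative.toAdd s).coeff.support : Set ℤ) ⊆ U :=
      Set.subset_biUnion_of_mem (u := fun t => ((Multiplicative.toAdd t).coeff.support : Set ℤ)) hs
    exact hsub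
  obtain ⟨q₀, hq₀⟩ := Finsupp.support_nonempty_iff.mpr (mt AddMonoidAlgebra.coeff_eq_zero.mp hQ)
  have hq₀' : Q.coeff q₀ ≠ 0 := Finsupp.mem_support_iff.mp hq₀
  have hmem : ∀ j : ℤ, j * n p + q₀ ∈ U := by
    intro j
    set op : RAAG Γ := PresentedGroup.of p with hop
    set d : RAAG Γ := op ^ j * c * (op ^ j)⁻¹ with hd
    have hdker : d ∈ f.ker := by
      have hfd : f d = 1 := by
        rw [hd, map_mul, map_mul, map_inv, hc, mul_one, map_zpow, mul_inv_cancel]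
      exact MonoidHom.mem_ker.mpr hfd
    have hofp : h op = (⟨0, n p⟩ : LL) := by
      have h1 : h op = F p := PresentedGroup.toGroup.of hFrel
      rw [h1, hFp]
    have himg : h d = ⟨T (j * n p) * Q, 0⟩ := by
      rw [hd]
      simp only [map_mul, map_inv, map_zpow, hofp, LL.shift_zpow]
      have hcs := LL.conj_shift (j * n p) Q
      rw [← hhc] at hcs
      exact hcs
    have hin : ℓ ⟨d, hdker⟩ ∈ K := hrange ⟨⟨d, hdker⟩, rfl⟩
    have hval : Multiplicative.toAdd (ℓ ⟨d, hdker⟩) = T (j * n p) * Q := by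
      show Multiplicative.toAdd (Multiplicative.ofAdd (h d).q) = _
      rw [himg]
      rfl
    have hsup : (((T (j * n p) * Q : LaurentPolynomial ℤ)).coeff.support : Set ℤ) ⊆ U := by
      have h5 := hin
      simp only [hK, Subgroup.mem_mk, Set.mem_setOf_eq, hval] at h5
      rw [← hval]
      exact h5
    apply hsup
    simp only [Finset.mem_coe, Finsupp.mem_support_iff]
    have h6 : (T (j * n p) * Q : LaurentPolynomial ℤ).coeff (j * n p + q₀) = 1 * Q.coeff q₀ := by
      rw [show (T (j * n p) : LaurentPolynomial ℤ) = AddMonoidAlgebra.single (j * n p) 1 from rfl]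
      exact AddMonoidAlgebra.coeff_single_mul_add Q 1 (j * n p) q₀
    rw [h6, one_mul]
    exact hq₀'
  have hinj : Function.Injective (fun j : ℤ => j * n p + q₀) := by
    intro j1 j2 hj
    have h8 := add_right_cancel hj
    exact mul_right_cancel₀ hm h8
  exact (Set.infinite_of_injective_forall_mem hinj hmem) hUfin

end Core
section Main

open LaurentPolynomial

variable {V : Type*} {Γ : SimpleGraph V}

lemma LL.shift_mul (s t : ℤ) : (⟨0, s⟩ : LL) * ⟨0, t⟩ = ⟨0, s + t⟩ := by
  apply LL.ext
  · show 0 + T s * 0 = 0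
    simp
  · rfl

/-- Main case lemma: all of `A ∩ B` is dead, `p ∈ A` is alive, `u ∈ B \ A`. -/
lemma main_case (f : RAAG Γ →* Multiplicative ℝ)
    (a : ℝ) (ha : a ≠ 0) (n : V → ℤ)
    (hn : ∀ v, (f (PresentedGroup.of v)).toAdd = n v • a)
    (A B : Set V)
    (hedges : ∀ x y, Γ.Adj x y → (x ∈ A ∧ y ∈ A) ∨ (x ∈ B ∧ y ∈ B))
    (hcov : ∀ v, v ∉ A → v ∈ B)
    (hdead : ∀ v, v ∈ A → v ∈ B → f (PresentedGroup.of v) = 1)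
    (p : V) (hpA : p ∈ A) (hp : f (PresentedGroup.of p) ≠ 1)
    (u : V) (huB : u ∈ B) (huA : u ∉ A)
    (hfg : Group.FG f.ker) : False := by
  classical
  have hn0 : ∀ v, f (PresentedGroup.of v) = 1 → n v = 0 := by
    intro v hv
    have h1 := hn v
    rw [hv] at h1
    simp only [toAdd_one] at h1
    rcases smul_eq_zero.mp h1.symm with h2 | h2
    · exact h2
    · exact absurd h2 ha
  have hlive : ∀ v, n v ≠ 0 → f (PresentedGroup.of v) ≠ 1 := fun v hv h1 => hv (hn0 v h1)
  have hnp : n p ≠ 0 := by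
    intro h0
    apply hp
    have h1 := hn p
    rw [h0] at h1
    simp only [zero_smul] at h1
    rw [← ofAdd_toAdd (f (PresentedGroup.of p)), h1]
    rfl
  by_cases hq : ∃ q', q' ∈ B ∧ q' ∉ A ∧ f (PresentedGroup.of q') ≠ 1
  · -- Case B : a living vertex on the other side
    obtain ⟨w, hwB, hwA, hwlive⟩ := hq
    have hnw : n w ≠ 0 := by
      intro h0
      apply hwlive
      have h1 := hn w
      rw [h0] at h1
      simp only [zero_smul] at h1
      rw [← ofAdd_toAdd (f (PresentedGroup.of w)), h1]
      rfl
    set F : V → LL := fun v => if v ∈ A then ⟨0, n v⟩ else (⟨1, 1⟩ : LL) ^ (n v) with hF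
    have hcomm : ∀ v w', Γ.Adj v w' → F v * F w' = F w' * F v := by
      intro v w' hadj
      rcases hedges v w' hadj with ⟨hv, hw⟩ | ⟨hv, hw⟩
      · rw [hF]
        simp only [if_pos hv, if_pos hw]
        rw [LL.shift_mul, LL.shift_mul, add_comm]
      · by_cases hvA : v ∈ A
        · have h0 : n v = 0 := hn0 v (hdead v hvA hv)
          have h1 : F v = 1 := by rw [hF]; simp only [if_pos hvA, h0]; rfl
          rw [h1, one_mul, mul_one]
        · by_cases hwA' : w' ∈ A
          · have h0 : n w' = 0 := hn0 w' (hdead w' hwA' hw)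
            have h1 : F w' = 1 := by rw [hF]; simp only [if_pos hwA', h0]; rfl
            rw [h1, one_mul, mul_one]
          · rw [hF]
            simp only [if_neg hvA, if_neg hwA']
            rw [← zpow_add, ← zpow_add, add_comm]
    have hFrel := comm_lift F hcomm
    have hF2 : ∀ v, (F v).z = n v := by
      intro v
      rw [hF]
      by_cases hvA : v ∈ A
      · simp only [if_pos hvA]
      · simp only [if_neg hvA, LL.g_z]
    have hFp : F p = ⟨0, n p⟩ := by rw [hF]; simp only [if_pos hpA]
    have hFw : F w = (⟨1, 1⟩ : LL) ^ (n w) := by rw [hF]; simp only [if_neg hwA]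
    set h : RAAG Γ →* LL := PresentedGroup.toGroup hFrel with hh
    set c : RAAG Γ :=
      ((PresentedGroup.of p : RAAG Γ) ^ (n w)) * ((PresentedGroup.of w : RAAG Γ) ^ (-(n p)))
      with hcdef
    have hc : f c = 1 := by
      have h1 : (f c).toAdd = 0 := by
        rw [hcdef]
        erw [map_mul, map_zpow, map_zpow]
        rw [toAdd_mul, toAdd_zpow, toAdd_zpow,
          hn p, hn w, smul_smul, smul_smul]
        rw [← add_smul]
        have : n w * n p + -n p * n w = 0 := by ring
        rw [this, zero_smul]
      rw [← ofAdd_toAdd (f c), h1]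
      rfl
    set Q : LaurentPolynomial ℤ :=
      T (n w * n p) * ((⟨1, 1⟩ : LL) ^ (n w * -n p)).q with hQdef
    have hQ : Q ≠ 0 := by
      apply LL.T_mul_ne_zero
      apply LL.g_q_ne
      intro h0
      rcases mul_eq_zero.mp h0 with h1 | h1
      · exact hnw h1
      · exact hnp (neg_eq_zero.mp h1)
    have hofp : h (PresentedGroup.of p) = F p := PresentedGroup.toGroup.of hFrel
    have hofw : h (PresentedGroup.of w) = F w := PresentedGroup.toGroup.of hFrel
    have hhc : h c = ⟨Q, 0⟩ := by
      rw [hcdef]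
      erw [map_mul, map_zpow, map_zpow]
      rw [hofp, hofw, hFp, hFw,
        LL.shift_zpow, ← zpow_mul]
      apply LL.ext
      · show 0 + T (n w * n p) * ((⟨1, 1⟩ : LL) ^ (n w * -n p)).q = Q
        rw [zero_add, hQdef]
      · show n w * n p + ((⟨1, 1⟩ : LL) ^ (n w * -n p)).z = 0
        rw [LL.g_z]; ring
    exact core f a ha n hn F hFrel hF2 p hFp hnp c hc Q hQ hhc hfg
  · -- Case A : everything in B \ A is dead
    push_neg at hq
    set F : V → LL := fun v => if v ∈ A then ⟨0, n v⟩ else ⟨1, 0⟩ with hF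
    have hFalt : ∀ v, v ∉ A → F v = ⟨1, 0⟩ := by
      intro v hv; rw [hF]; simp only [if_neg hv]
    have hcomm : ∀ v w', Γ.Adj v w' → F v * F w' = F w' * F v := by
      intro v w' hadj
      rcases hedges v w' hadj with ⟨hv, hw⟩ | ⟨hv, hw⟩
      · rw [hF]
        simp only [if_pos hv, if_pos hw]
        rw [LL.shift_mul, LL.shift_mul, add_comm]
      · have key : ∀ x, x ∈ B → F x = 1 ∨ F x = ⟨1, 0⟩ := by
          intro x hx
          by_cases hxA : x ∈ A
          · left
            have h0 : n x = 0 := hn0 x (hdead x hxA hx)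
            rw [hF]; simp only [if_pos hxA, h0]; rfl
          · right; exact hFalt x hxA
        rcases key v hv with h1 | h1 <;> rcases key w' hw with h2 | h2 <;>
          rw [h1, h2] <;> simp
    have hFrel := comm_lift F hcomm
    have hF2 : ∀ v, (F v).z = n v := by
      intro v
      by_cases hvA : v ∈ A
      · rw [hF]; simp only [if_pos hvA]
      · have h0 : n v = 0 := hn0 v (hq v (hcov v hvA) hvA)
        rw [hFalt v hvA, h0]
    have hFp : F p = ⟨0, n p⟩ := by rw [hF]; simp only [if_pos hpA]
    set h : RAAG Γ →* LL := PresentedGroup.toGroup hFrel with hh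
    have hc : f (PresentedGroup.of u : RAAG Γ) = 1 := hq u huB huA
    have hhc : h (PresentedGroup.of u : RAAG Γ) = ⟨(1 : LaurentPolynomial ℤ), 0⟩ := by
      have h1 : h (PresentedGroup.of u) = F u := PresentedGroup.toGroup.of hFrel
      rw [h1, hFalt u huA]
    exact core f a ha n hn F hFrel hF2 p hFp hnp _ hc 1 one_ne_zero hhc hfg

end Main

/-- Let Γ be a finite connected graph, (Γ₁, Γ₂, Γ₃) a splitting of Γ (full
subgraphs encoded by their vertex sets), and f : A(Γ) → ℝ a nonzero discrete character with
finitely generated kernel. Then the restriction of f to A(Γ₃) is not identically zero, i.e.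
f is nonzero on some generator coming from S₃. -/
theorem stmt_9 {V : Type*} [Fintype V] (Γ : SimpleGraph V) (hconn : Γ.Connected)
    (S₁ S₂ S₃ : Set V)
    (hne1 : S₁.Nonempty) (hne2 : S₂.Nonempty) (hne3 : S₃.Nonempty)
    (hd12 : S₁ ≠ S₂) (hd13 : S₁ ≠ S₃) (hd23 : S₂ ≠ S₃)
    (hcover : S₁ ∪ S₂ = Set.univ) (hmeet : S₁ ∩ S₂ = S₃)
    (hedges : ∀ a b : V, Γ.Adj a b → (a ∈ S₁ ∧ b ∈ S₁) ∨ (a ∈ S₂ ∧ b ∈ S₂))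
    (f : RAAG Γ →* Multiplicative ℝ) (hf0 : f ≠ 1) (hdisc : IsDiscreteChar f)
    (hfg : Group.FG f.ker) :
    ∃ v ∈ S₃, f (RAAG.of v) ≠ 1 := by
  by_contra hcon
  push_neg at hcon
  obtain ⟨a, ha, hall, -⟩ := hdisc
  have hnex : ∀ v : V, ∃ k : ℤ, (f (PresentedGroup.of v : RAAG Γ)).toAdd = k • a :=
    fun v => hall _
  choose n hn using hnex
  -- there is a living generator
  have hex : ∃ v, f (PresentedGroup.of v : RAAG Γ) ≠ 1 := by
    by_contra hno
    push_neg at hno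
    apply hf0
    refine pg_hom_ext f 1 (fun v => ?_)
    rw [MonoidHom.one_apply]
    exact hno v
  obtain ⟨v₀, hv₀⟩ := hex
  have hv₀3 : v₀ ∉ S₃ := fun h3 => hv₀ (hcon v₀ h3)
  have hdead1 : ∀ v, v ∈ S₁ → v ∈ S₂ → f (PresentedGroup.of v : RAAG Γ) = 1 :=
    fun v h1 h2 => hcon v (hmeet ▸ ⟨h1, h2⟩)
  have hcov1 : ∀ v, v ∉ S₁ → v ∈ S₂ := by
    intro v hv
    have : v ∈ S₁ ∪ S₂ := by rw [hcover]; trivial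
    rcases this with h | h
    · exact absurd h hv
    · exact h
  have hcov2 : ∀ v, v ∉ S₂ → v ∈ S₁ := by
    intro v hv
    have : v ∈ S₁ ∪ S₂ := by rw [hcover]; trivial
    rcases this with h | h
    · exact h
    · exact absurd h hv
  by_cases hv₀1 : v₀ ∈ S₁
  · -- apply with A = S₁, B = S₂; need u ∈ S₂ \ S₁
    have hu : ∃ u, u ∈ S₂ ∧ u ∉ S₁ := by
      by_contra hno
      push_neg at hno
      apply hd23
      rw [← hmeet]
      ext x
      simp only [Set.mem_inter_iff]
      exact ⟨fun h2 => ⟨hno x h2, h2⟩, fun h => h.2⟩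
    obtain ⟨u, huB, huA⟩ := hu
    exact (main_case f a ha n hn S₁ S₂ hedges hcov1 hdead1 v₀ hv₀1 hv₀ u huB huA hfg).elim
  · -- apply with A = S₂, B = S₁
    have hv₀2 : v₀ ∈ S₂ := hcov1 v₀ hv₀1
    have hu : ∃ u, u ∈ S₁ ∧ u ∉ S₂ := by
      by_contra hno
      push_neg at hno
      apply hd13
      rw [← hmeet]
      ext x
      simp only [Set.mem_inter_iff]
      exact ⟨fun h1 => ⟨h1, hno x h1⟩, fun h => h.1⟩
    obtain ⟨u, huB, huA⟩ := hu
    exact (main_case f a ha n hn S₂ S₁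
      (fun x y hadj => (hedges x y hadj).symm) hcov2
      (fun v h2 h1 => hdead1 v h1 h2) v₀ hv₀2 hv₀ u huB huA hfg).elim
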